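/- Let E be a real vector space, N a seminorm on E, b : ι → E a linearly independent family such that N is conically additive on b, and c : ℕ → E a sequence with each c(p) in the cone generated by b, such that for every t in the cone generated by b there exists p ∈ ℕ with N(c(p) − t) ≤ N(c(p)) − N(t). Then for every x ∈ E, the set of values { g(x) : g : E → ℝ linear, g(z) ≤ N(z) for all z ∈ E, and g(b(i)) = N(b(i)) for all i ∈ ι } is exactly the closed interval [−ℓ(−x), ℓ(x)], where ℓ(x) = ⨅ p, (N(c(p) + x) − N(c(p))). -/

import Mathlib

/-- `t` lies in the cone generated by the family `b`: it is a finite non-negative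
linear combination of the `b i`. -/
def InCone {E ι : Type*} [AddCommGroup E] [Module ℝ E] (b : ι → E) (t : E) : Prop :=
  ∃ a : ι →₀ ℝ, (∀ i, 0 ≤ a i) ∧ t = a.sum fun i r => r • b i

/-- The seminorm `N` is conically additive on the family `b`. -/
def ConicallyAdditive {E ι : Type*} [AddCommGroup E] [Module ℝ E]
    (N : Seminorm ℝ E) (b : ι → E) : Prop :=
  ∀ a : ι →₀ ℝ, (∀ i, 0 ≤ a i) →
    N (a.sum fun i r => r • b i) = a.sum fun i r => r * N (b i)

section Aux
variable {E ι : Type*} [AddCommGroup E] [Module ℝ E]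

lemma inCone_zero (b : ι → E) : InCone b 0 := ⟨0, fun _ => le_refl 0, by simp⟩

lemma inCone_add {b : ι → E} {s t : E} (hs : InCone b s) (ht : InCone b t) :
    InCone b (s + t) := by
  obtain ⟨a, ha, rfl⟩ := hs
  obtain ⟨a', ha', rfl⟩ := ht
  refine ⟨a + a', fun i => by simpa using add_nonneg (ha i) (ha' i), ?_⟩
  rw [Finsupp.sum_add_index' (fun i => zero_smul ℝ (b i)) (fun i r s => add_smul r s (b i))]

lemma inCone_b (b : ι → E) (i : ι) : InCone b (b i) := by
  classical
  refine ⟨Finsupp.single i 1, fun j => ?_, ?_⟩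
  · rw [Finsupp.single_apply]; split <;> norm_num
  · rw [Finsupp.sum_single_index (by simp), one_smul]

lemma inCone_smul {b : ι → E} {a : ℝ} (ha : 0 ≤ a) {t : E} (ht : InCone b t) :
    InCone b (a • t) := by
  obtain ⟨f, hf, rfl⟩ := ht
  refine ⟨a • f, fun i => by simpa using mul_nonneg ha (hf i), ?_⟩
  rw [Finsupp.sum_smul_index' (fun i => zero_smul ℝ (b i)), Finsupp.smul_sum]
  exact Finsupp.sum_congr fun i _ => (mul_smul a (f i) (b i)).symm

lemma N_cone {N : Seminorm ℝ E} {b : ι → E} (hN : ConicallyAdditive N b)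
    {s t : E} (hs : InCone b s) (ht : InCone b t) : N (s + t) = N s + N t := by
  obtain ⟨a, ha, rfl⟩ := hs
  obtain ⟨a', ha', rfl⟩ := ht
  rw [← Finsupp.sum_add_index' (fun i => zero_smul ℝ (b i)) (fun i r s => add_smul r s (b i)),
    hN (a + a') (fun i => by simpa using add_nonneg (ha i) (ha' i)),
    Finsupp.sum_add_index' (fun i => zero_mul (N (b i))) (fun i r s => add_mul r s (N (b i))),
    hN a ha, hN a' ha']

lemma g_cone {N : Seminorm ℝ E} {b : ι → E} (hN : ConicallyAdditive N b)
    (g : E →ₗ[ℝ] ℝ) (hgb : ∀ i, g (b i) = N (b i)) {t : E} (ht : InCone b t) :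
    g t = N t := by
  obtain ⟨a, ha, rfl⟩ := ht
  rw [map_finsuppSum, hN a ha]
  exact Finsupp.sum_congr fun i _ => by rw [map_smul, smul_eq_mul, hgb i]

end Aux

section Ell
variable {E ι : Type*} [AddCommGroup E] [Module ℝ E]

noncomputable def ell (N : Seminorm ℝ E) (c : ℕ → E) (x : E) : ℝ :=
  ⨅ p, (N (c p + x) - N (c p))

lemma ell_bdd (N : Seminorm ℝ E) (c : ℕ → E) (x : E) :
    BddBelow (Set.range fun p => N (c p + x) - N (c p)) := by
  refine ⟨-N x, ?_⟩
  rintro _ ⟨p, rfl⟩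
  have h : N (c p) ≤ N (c p + x) + N x := by
    calc N (c p) = N (c p + x + -x) := by rw [add_neg_cancel_right]
    _ ≤ N (c p + x) + N (-x) := map_add_le_add N _ _
    _ = N (c p + x) + N x := by rw [map_neg_eq_map]
  simp only [Set.mem_setOf_eq]
  linarith

lemma ell_le_term (N : Seminorm ℝ E) (c : ℕ → E) (x : E) (p : ℕ) :
    ell N c x ≤ N (c p + x) - N (c p) :=
  ciInf_le (ell_bdd N c x) p

lemma term_le (N : Seminorm ℝ E) (c : ℕ → E) (x : E) (p : ℕ) :
    -N x ≤ N (c p + x) - N (c p) := by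
  have h : N (c p) ≤ N (c p + x) + N x := by
    calc N (c p) = N (c p + x + -x) := by rw [add_neg_cancel_right]
    _ ≤ N (c p + x) + N (-x) := map_add_le_add N _ _
    _ = N (c p + x) + N x := by rw [map_neg_eq_map]
  linarith

variable {N : Seminorm ℝ E} {b : ι → E} {c : ℕ → E}
  (hN : ConicallyAdditive N b) (hc : ∀ p : ℕ, InCone b (c p))
  (hfac : ∀ t : E, InCone b t → ∃ p : ℕ, N (c p - t) ≤ N (c p) - N t)

include hfac in
lemma ell_le_of {t : E} (ht : InCone b t) (x : E) : ell N c x ≤ N (t + x) - N t := by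
  obtain ⟨p, hp⟩ := hfac t ht
  have h1 : N (c p + x) ≤ N (c p - t) + N (t + x) := by
    calc N (c p + x) = N (c p - t + (t + x)) := by rw [show c p - t + (t + x) = c p + x by abel]
    _ ≤ _ := map_add_le_add N _ _
  have h2 := ell_le_term N c x p
  linarith

include hfac in
lemma ell_le_N (x : E) : ell N c x ≤ N x := by
  have := ell_le_of (b := b) hfac (inCone_zero b) x
  simpa using this

lemma ell_zero : ell N c 0 = 0 := by
  simp only [ell, add_zero, sub_self]
  exact ciInf_const

include hN hc hfac in
lemma ell_add (x y : E) : ell N c (x + y) ≤ ell N c x + ell N c y := by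
  have key : ∀ p q : ℕ, ell N c (x + y) ≤
      (N (c p + x) - N (c p)) + (N (c q + y) - N (c q)) := by
    intro p q
    have ht : InCone b (c p + c q) := inCone_add (hc p) (hc q)
    have h1 := ell_le_of (b := b) hfac ht (x + y)
    have h2 : N (c p + c q + (x + y)) ≤ N (c p + x) + N (c q + y) := by
      calc N (c p + c q + (x + y)) = N (c p + x + (c q + y)) := by
            rw [show c p + c q + (x + y) = c p + x + (c q + y) by abel]
      _ ≤ _ := map_add_le_add N _ _
    have h3 : N (c p + c q) = N (c p) + N (c q) := N_cone hN (hc p) (hc q)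
    linarith
  have s1 : ∀ q : ℕ, ell N c (x + y) - (N (c q + y) - N (c q)) ≤ ell N c x := fun q =>
    le_ciInf fun p => by have := key p q; linarith
  have s2 : ell N c (x + y) - ell N c x ≤ ell N c y :=
    le_ciInf fun q => by have := s1 q; linarith
  linarith

include hc hfac in
lemma ell_smul_le {a : ℝ} (ha : 0 < a) (x : E) : ell N c (a • x) ≤ a * ell N c x := by
  rw [mul_comm, ← div_le_iff₀ ha]
  refine le_ciInf fun p => ?_
  rw [div_le_iff₀ ha]
  have ht : InCone b (a • c p) := inCone_smul ha.le (hc p)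
  have h := ell_le_of (b := b) hfac ht (a • x)
  rw [show a • c p + a • x = a • (c p + x) by rw [smul_add], map_smul_eq_mul,
    map_smul_eq_mul, Real.norm_eq_abs, abs_of_pos ha] at h
  nlinarith [h]

include hc hfac in
lemma ell_smul {a : ℝ} (ha : 0 < a) (x : E) : ell N c (a • x) = a * ell N c x := by
  refine le_antisymm (ell_smul_le hc hfac ha x) ?_
  have h := ell_smul_le hc hfac (inv_pos.mpr ha) (a • x)
  rw [inv_smul_smul₀ ha.ne'] at h
  have h2 : a * ell N c x ≤ a * (a⁻¹ * ell N c (a • x)) :=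
    mul_le_mul_of_nonneg_left h ha.le
  rw [← mul_assoc, mul_inv_cancel₀ ha.ne', one_mul] at h2
  exact h2

include hN hc in
lemma ell_b (i : ι) : N (b i) ≤ ell N c (b i) := by
  refine le_ciInf fun p => ?_
  have h : N (c p + b i) = N (c p) + N (b i) := N_cone hN (hc p) (inCone_b b i)
  linarith

include hfac in
lemma ell_neg_b (i : ι) : ell N c (-(b i)) ≤ -(N (b i)) := by
  have := ell_le_of (b := b) hfac (inCone_b b i) (-(b i))
  simpa using this

end Ell

/-- abstract form of Theorem 1.2.  Under the hypotheses on `b`, `N`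
and `c`, for every `x ∈ E` the set of values `g x` over all linear functionals
`g` dominated by `N` and taking the value `N (b i)` at each `b i` is exactly the
closed interval `[-ℓ(-x), ℓ(x)]`, where `ℓ(x) = ⨅ p, (N (c p + x) - N (c p))`. -/
theorem stmt_10 {E ι : Type*} [AddCommGroup E] [Module ℝ E]
    (N : Seminorm ℝ E) (b : ι → E) (hb : LinearIndependent ℝ b)
    (hN : ConicallyAdditive N b)
    (c : ℕ → E) (hc : ∀ p : ℕ, InCone b (c p))
    (hfac : ∀ t : E, InCone b t → ∃ p : ℕ, N (c p - t) ≤ N (c p) - N t) :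
    ∀ x : E,
      {y : ℝ | ∃ g : E →ₗ[ℝ] ℝ,
          (∀ z : E, g z ≤ N z) ∧ (∀ i, g (b i) = N (b i)) ∧ g x = y} =
        Set.Icc (-(⨅ p : ℕ, (N (c p + -x) - N (c p))))
          (⨅ p : ℕ, (N (c p + x) - N (c p))) := by
  intro x
  show _ = Set.Icc (-(ell N c (-x))) (ell N c x)
  ext y
  simp only [Set.mem_setOf_eq, Set.mem_Icc]
  constructor
  · rintro ⟨g, hg, hgb, rfl⟩
    have key : ∀ z : E, g z ≤ ell N c z := by
      intro z
      refine le_ciInf fun p => ?_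
      have h1 : g (c p) = N (c p) := g_cone hN g hgb (hc p)
      have h2 : g (c p + z) ≤ N (c p + z) := hg _
      rw [map_add, h1] at h2
      linarith
    refine ⟨?_, key x⟩
    have := key (-x)
    rw [map_neg] at this
    linarith
  · rintro ⟨hy1, hy2⟩
    have H : ∀ a : ℝ, a • x = 0 → a • y = 0 := by
      intro a ha
      rcases smul_eq_zero.mp ha with rfl | hx0
      · simp
      · subst hx0
        have h1 : ell N c (0 : E) = 0 := ell_zero
        rw [neg_zero, h1, neg_zero] at hy1
        rw [h1] at hy2
        have : y = 0 := le_antisymm hy2 hy1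
        simp [this]
    set f := LinearPMap.mkSpanSingleton' (σ := RingHom.id ℝ) x y H with hfdef
    have hdom : ∀ z : f.domain, f z ≤ ell N c z.1 := by
      rintro ⟨z, hz⟩
      have hz' : z ∈ Submodule.span ℝ {x} := hz
      obtain ⟨a, rfl⟩ := Submodule.mem_span_singleton.mp hz'
      show f ⟨a • x, hz⟩ ≤ ell N c (a • x)
      have happ : f ⟨a • x, hz⟩ = a • y := LinearPMap.mkSpanSingleton'_apply x y H a hz
      rw [happ, smul_eq_mul]
      rcases lt_trichotomy a 0 with hneg | rfl | hpos
      · have heq : ell N c (a • x) = (-a) * ell N c (-x) := by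
          rw [show a • x = (-a) • (-x) by rw [neg_smul, smul_neg, neg_neg]]
          exact ell_smul hc hfac (by linarith) (-x)
        rw [heq]
        have h3 : -y ≤ ell N c (-x) := by linarith
        nlinarith
      · rw [zero_smul]
        simpa using le_of_eq (ell_zero (N := N) (c := c)).symm
      · rw [ell_smul hc hfac hpos x]
        nlinarith
    obtain ⟨g, hg_eq, hg_le⟩ := exists_extension_of_le_sublinear f (ell N c)
      (fun a ha z => ell_smul hc hfac ha z) (fun z w => ell_add hN hc hfac z w) hdom
    refine ⟨g, ?_, ?_, ?_⟩
    · exact fun z => le_trans (hg_le z) (ell_le_N hfac z)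
    · intro i
      have h1 : g (b i) ≤ N (b i) := le_trans (hg_le _) (ell_le_N hfac _)
      have h2 : g (-(b i)) ≤ ell N c (-(b i)) := hg_le _
      rw [map_neg] at h2
      have h3 := ell_neg_b (b := b) hfac i
      linarith
    · have hx : x ∈ f.domain := Submodule.mem_span_singleton_self x
      have h1 := hg_eq ⟨x, hx⟩
      have h2 : f ⟨x, hx⟩ = y := LinearPMap.mkSpanSingleton'_apply_self x y H hx
      rw [h2] at h1
      exact h1
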